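/- Let D, D' ∈ H⁴ satisfy Jₖ(D) = Jₖ(D') for k = 2, 3, 4, 5, and suppose one of the following four cases holds: (i) there exist g, g' ∈ SO(3) and δ, δ' ∈ ℝ with g·D = NF_cubic(δ) and g'·D' = NF_cubic(δ'), and J₂(D) ≠ 0 and J₂(D') ≠ 0; (ii) the same with NF_TI in place of NF_cubic, with J₂(D) ≠ 0 and J₂(D') ≠ 0; (iii) there exist g, g' ∈ SO(3) and δ, σ, δ', σ' ∈ ℝ with g·D = NF_trig(δ, σ) and g'·D' = NF_trig(δ', σ'), and both D and D' satisfy 3J₄ − J₂² ≠ 0 and 98J₄ − 41J₂² ≠ 0; (iv) the same with NF_tetra in place of NF_trig, where both D and D' satisfy 3J₄ − J₂² ≠ 0 and 5J₂³ − 8J₂J₄ − 70J₃² ≠ 0. Then D and D' lie on the same SO(3)-orbit: there exists h ∈ SO(3) with D' = h·D. (The invariants J₂, …, J₅ separate the orbits inside the cubic, transversely isotropic, trigonal and tetragonal classes.) -/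
import Mathlib


open Matrix BigOperators

abbrev Mat3 := Matrix (Fin 3) (Fin 3) ℝ
abbrev T4 := Fin 3 → Fin 3 → Fin 3 → Fin 3 → ℝ

/-- `g ∈ SO(3)`: real orthogonal 3×3 matrix of determinant 1. -/
def IsSO3 (g : Mat3) : Prop := g * gᵀ = 1 ∧ g.det = 1

/-- A harmonic fourth-order tensor: totally symmetric and traceless. -/
def IsHarm (D : T4) : Prop :=
  (∀ i j k l, D i j k l = D j i k l) ∧
  (∀ i j k l, D i j k l = D i k j l) ∧
  (∀ i j k l, D i j k l = D i j l k) ∧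
  (∀ i j, ∑ k, D k k i j = 0)

/-- The action of a rotation `g` on a fourth-order tensor. -/
noncomputable def act (g : Mat3) (D : T4) : T4 := fun i j k l =>
  ∑ p, ∑ q, ∑ r, ∑ s, g i p * g j q * g k r * g l s * D p q r s

/-- `D²`, the square of a fourth-order tensor. -/
noncomputable def sqT (D : T4) : T4 := fun i j k l => ∑ p, ∑ q, D i j p q * D p q k l

/-- `D³`, the cube of a fourth-order tensor. -/
noncomputable def cbT (D : T4) : T4 := fun i j k l => ∑ p, ∑ q, sqT D i j p q * D p q k l

/-- The second-order Boehler covariant `d₂(D) j l = ∑ᵢ (D²) i j i l`. -/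
noncomputable def d2 (D : T4) : Mat3 := Matrix.of fun j l => ∑ i, sqT D i j i l

/-- The second-order covariant `d₃(D) j l = ∑ᵢ (D³) i j i l`. -/
noncomputable def d3 (D : T4) : Mat3 := Matrix.of fun j l => ∑ i, cbT D i j i l

/-- Fundamental invariant `J₂ = tr d₂`. -/
noncomputable def J2 (D : T4) : ℝ := (d2 D).trace
/-- Fundamental invariant `J₃ = tr d₃`. -/
noncomputable def J3 (D : T4) : ℝ := (d3 D).trace
/-- Fundamental invariant `J₄ = tr(d₂²)`. -/
noncomputable def J4 (D : T4) : ℝ := (d2 D * d2 D).trace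
/-- Fundamental invariant `J₅ = ∑ (d₂)ᵢⱼ D i j k l (d₂)ₖₗ`. -/
noncomputable def J5 (D : T4) : ℝ :=
  ∑ i, ∑ j, ∑ k, ∑ l, d2 D i j * D i j k l * d2 D k l
/-- Fundamental invariant `J₆ = tr(d₂³)`. -/
noncomputable def J6 (D : T4) : ℝ := (d2 D * d2 D * d2 D).trace
/-- Fundamental invariant `J₇ = ∑ (d₂²)ᵢⱼ D i j k l (d₂)ₖₗ`. -/
noncomputable def J7 (D : T4) : ℝ :=
  ∑ i, ∑ j, ∑ k, ∑ l, (d2 D * d2 D) i j * D i j k l * d2 D k l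
/-- Fundamental invariant `J₈ = ∑ (d₂²)ᵢⱼ (D²) i j k l (d₂)ₖₗ`. -/
noncomputable def J8 (D : T4) : ℝ :=
  ∑ i, ∑ j, ∑ k, ∑ l, (d2 D * d2 D) i j * sqT D i j k l * d2 D k l
/-- Fundamental invariant `J₉ = ∑ (d₂²)ᵢⱼ D i j k l (d₂²)ₖₗ`. -/
noncomputable def J9 (D : T4) : ℝ :=
  ∑ i, ∑ j, ∑ k, ∑ l, (d2 D * d2 D) i j * D i j k l * (d2 D * d2 D) k l
/-- Fundamental invariant `J₁₀ = ∑ (d₂²)ᵢⱼ (D²) i j k l (d₂²)ₖₗ`. -/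
noncomputable def J10 (D : T4) : ℝ :=
  ∑ i, ∑ j, ∑ k, ∑ l, (d2 D * d2 D) i j * sqT D i j k l * (d2 D * d2 D) k l

/-- The totally symmetric tensor whose value at `(i,j,k,l)` depends only on the
multiset of indices `{i,j,k,l}`. -/
noncomputable def symT (f : Multiset (Fin 3) → ℝ) : T4 := fun i j k l => f {i, j, k, l}

/-- Normal form of a cubic (`[𝕆]`) tensor in `H⁴` with parameter `δ`
(indices `0,1,2` correspond to `1,2,3`). -/
noncomputable def NFcubic (δ : ℝ) : T4 := symT fun m =>
  if m = {0, 0, 0, 0} ∨ m = {1, 1, 1, 1} ∨ m = {2, 2, 2, 2} then 8 * δ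
  else if m = {0, 0, 1, 1} ∨ m = {0, 0, 2, 2} ∨ m = {1, 1, 2, 2} then -(4 * δ)
  else 0

/-- Normal form of a transversely isotropic (`[O(2)]`) tensor in `H⁴` with parameter `δ`. -/
noncomputable def NFti (δ : ℝ) : T4 := symT fun m =>
  if m = {0, 0, 0, 0} ∨ m = {1, 1, 1, 1} then 3 * δ
  else if m = {2, 2, 2, 2} then 8 * δ
  else if m = {0, 0, 1, 1} then δ
  else if m = {0, 0, 2, 2} ∨ m = {1, 1, 2, 2} then -(4 * δ)
  else 0

/-- Normal form of a trigonal (`[𝔻₃]`) tensor in `H⁴` with parameters `δ, σ`. -/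
noncomputable def NFtrig (δ σ : ℝ) : T4 := symT fun m =>
  if m = {0, 0, 0, 0} ∨ m = {1, 1, 1, 1} then 3 * δ
  else if m = {2, 2, 2, 2} then 8 * δ
  else if m = {0, 0, 1, 1} then δ
  else if m = {0, 0, 2, 2} ∨ m = {1, 1, 2, 2} then -(4 * δ)
  else if m = {0, 0, 1, 2} then -σ
  else if m = {1, 1, 1, 2} then σ
  else 0

/-- Normal form of a tetragonal (`[𝔻₄]`) tensor in `H⁴` with parameters `δ, σ`. -/
noncomputable def NFtetra (δ σ : ℝ) : T4 := symT fun m =>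
  if m = {0, 0, 0, 0} ∨ m = {1, 1, 1, 1} then 3 * δ - σ
  else if m = {2, 2, 2, 2} then 8 * δ
  else if m = {0, 0, 1, 1} then δ + σ
  else if m = {0, 0, 2, 2} ∨ m = {1, 1, 2, 2} then -(4 * δ)
  else 0

/-- Normal form of an orthotropic (`[𝔻₂]`) tensor in `H⁴` with parameters `λ₁, λ₂, λ₃`. -/
noncomputable def NForth (l1 l2 l3 : ℝ) : T4 := symT fun m =>
  if m = {0, 0, 0, 0} then -l2 - l3
  else if m = {1, 1, 1, 1} then -l1 - l3
  else if m = {2, 2, 2, 2} then -l1 - l2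
  else if m = {0, 0, 1, 1} then l3
  else if m = {0, 0, 2, 2} then l2
  else if m = {1, 1, 2, 2} then l1
  else 0
abbrev M9 := Matrix (Fin 3 × Fin 3) (Fin 3 × Fin 3) ℝ

/-- flatten a fourth-order tensor into a 9×9 matrix -/
noncomputable def tM (D : T4) : M9 := Matrix.of fun x y => D x.1 x.2 y.1 y.2

/-- Kronecker square of a 3×3 matrix -/
noncomputable def kr (g : Mat3) : M9 := Matrix.of fun x y => g x.1 y.1 * g x.2 y.2

lemma tM_inj {A B : T4} (h : tM A = tM B) : A = B := by
  funext i j k l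
  exact congrFun (congrFun h (i, j)) (k, l)

lemma kr_mul (g h : Mat3) : kr g * kr h = kr (g * h) := by
  ext ⟨i, j⟩ ⟨k, l⟩
  simp [kr, Matrix.mul_apply, Fintype.sum_prod_type, Fin.sum_univ_three]
  ring

lemma kr_transpose (g : Mat3) : (kr g)ᵀ = kr gᵀ := by
  ext ⟨i, j⟩ ⟨k, l⟩
  simp [kr]

lemma kr_one : kr (1 : Mat3) = 1 := by
  ext ⟨i, j⟩ ⟨k, l⟩
  simp [kr, Matrix.one_apply, Prod.ext_iff]
  by_cases h1 : i = k <;> by_cases h2 : j = l <;> simp [h1, h2]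

lemma kr_orth {g : Mat3} (hg : g * gᵀ = 1) : kr g * (kr g)ᵀ = 1 := by
  rw [kr_transpose, kr_mul, hg, kr_one]

lemma kr_orth' {g : Mat3} (hg : g * gᵀ = 1) : (kr g)ᵀ * kr g = 1 :=
  mul_eq_one_comm.mp (kr_orth hg)

lemma tM_act (g : Mat3) (D : T4) : tM (act g D) = kr g * tM D * (kr g)ᵀ := by
  ext ⟨i, j⟩ ⟨k, l⟩
  simp [tM, kr, act, Matrix.mul_apply, Fintype.sum_prod_type, Fin.sum_univ_three,
    Finset.sum_mul, Finset.mul_sum]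
  ring

lemma act_act (g h : Mat3) (D : T4) : act g (act h D) = act (g * h) D := by
  apply tM_inj
  rw [tM_act, tM_act, tM_act, ← kr_mul]
  simp [Matrix.transpose_mul, Matrix.mul_assoc]

lemma act_one (D : T4) : act 1 D = D := by
  apply tM_inj
  rw [tM_act, kr_one, Matrix.transpose_one, Matrix.mul_one, Matrix.one_mul]
/-- partial trace of a 9×9 matrix -/
noncomputable def ptr (A : M9) : Mat3 := Matrix.of fun j l => ∑ i, A (i, j) (i, l)

set_option maxHeartbeats 1600000 in
lemma ptr_conj {g : Mat3} (hg : gᵀ * g = 1) (A : M9) :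
    ptr (kr g * A * (kr g)ᵀ) = g * ptr A * gᵀ := by
  ext j l
  have h00 : g 0 0 * g 0 0 + g 1 0 * g 1 0 + g 2 0 * g 2 0 = 1 := by
    have := congrFun (congrFun hg 0) 0
    simpa [Matrix.mul_apply, Matrix.one_apply, Fin.sum_univ_three] using this
  have h01 : g 0 0 * g 0 1 + g 1 0 * g 1 1 + g 2 0 * g 2 1 = 0 := by
    have := congrFun (congrFun hg 0) 1
    simpa [Matrix.mul_apply, Matrix.one_apply, Fin.sum_univ_three] using this
  have h02 : g 0 0 * g 0 2 + g 1 0 * g 1 2 + g 2 0 * g 2 2 = 0 := by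
    have := congrFun (congrFun hg 0) 2
    simpa [Matrix.mul_apply, Matrix.one_apply, Fin.sum_univ_three] using this
  have h10 : g 0 1 * g 0 0 + g 1 1 * g 1 0 + g 2 1 * g 2 0 = 0 := by
    have := congrFun (congrFun hg 1) 0
    simpa [Matrix.mul_apply, Matrix.one_apply, Fin.sum_univ_three] using this
  have h11 : g 0 1 * g 0 1 + g 1 1 * g 1 1 + g 2 1 * g 2 1 = 1 := by
    have := congrFun (congrFun hg 1) 1
    simpa [Matrix.mul_apply, Matrix.one_apply, Fin.sum_univ_three] using this
  have h12 : g 0 1 * g 0 2 + g 1 1 * g 1 2 + g 2 1 * g 2 2 = 0 := by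
    have := congrFun (congrFun hg 1) 2
    simpa [Matrix.mul_apply, Matrix.one_apply, Fin.sum_univ_three] using this
  have h20 : g 0 2 * g 0 0 + g 1 2 * g 1 0 + g 2 2 * g 2 0 = 0 := by
    have := congrFun (congrFun hg 2) 0
    simpa [Matrix.mul_apply, Matrix.one_apply, Fin.sum_univ_three] using this
  have h21 : g 0 2 * g 0 1 + g 1 2 * g 1 1 + g 2 2 * g 2 1 = 0 := by
    have := congrFun (congrFun hg 2) 1
    simpa [Matrix.mul_apply, Matrix.one_apply, Fin.sum_univ_three] using this
  have h22 : g 0 2 * g 0 2 + g 1 2 * g 1 2 + g 2 2 * g 2 2 = 1 := by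
    have := congrFun (congrFun hg 2) 2
    simpa [Matrix.mul_apply, Matrix.one_apply, Fin.sum_univ_three] using this
  simp only [ptr, kr, Matrix.mul_apply, Matrix.transpose_apply, Matrix.of_apply]
  simp only [Fintype.sum_prod_type]
  simp only [Fin.sum_univ_three]
  linear_combination
      (g j 0 * g l 0 * A (0, 0) (0, 0) + g j 0 * g l 1 * A (0, 0) (0, 1) + g j 0 * g l 2 * A (0, 0) (0, 2) + g j 1 * g l 0 * A (0, 1) (0, 0) + g j 1 * g l 1 * A (0, 1) (0, 1) + g j 1 * g l 2 * A (0, 1) (0, 2) + g j 2 * g l 0 * A (0, 2) (0, 0) + g j 2 * g l 1 * A (0, 2) (0, 1) + g j 2 * g l 2 * A (0, 2) (0, 2)) * h00 +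
      (g j 0 * g l 0 * A (0, 0) (1, 0) + g j 0 * g l 1 * A (0, 0) (1, 1) + g j 0 * g l 2 * A (0, 0) (1, 2) + g j 1 * g l 0 * A (0, 1) (1, 0) + g j 1 * g l 1 * A (0, 1) (1, 1) + g j 1 * g l 2 * A (0, 1) (1, 2) + g j 2 * g l 0 * A (0, 2) (1, 0) + g j 2 * g l 1 * A (0, 2) (1, 1) + g j 2 * g l 2 * A (0, 2) (1, 2)) * h01 +
      (g j 0 * g l 0 * A (0, 0) (2, 0) + g j 0 * g l 1 * A (0, 0) (2, 1) + g j 0 * g l 2 * A (0, 0) (2, 2) + g j 1 * g l 0 * A (0, 1) (2, 0) + g j 1 * g l 1 * A (0, 1) (2, 1) + g j 1 * g l 2 * A (0, 1) (2, 2) + g j 2 * g l 0 * A (0, 2) (2, 0) + g j 2 * g l 1 * A (0, 2) (2, 1) + g j 2 * g l 2 * A (0, 2) (2, 2)) * h02 +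
      (g j 0 * g l 0 * A (1, 0) (0, 0) + g j 0 * g l 1 * A (1, 0) (0, 1) + g j 0 * g l 2 * A (1, 0) (0, 2) + g j 1 * g l 0 * A (1, 1) (0, 0) + g j 1 * g l 1 * A (1, 1) (0, 1) + g j 1 * g l 2 * A (1, 1) (0, 2) + g j 2 * g l 0 * A (1, 2) (0, 0) + g j 2 * g l 1 * A (1, 2) (0, 1) + g j 2 * g l 2 * A (1, 2) (0, 2)) * h10 +
      (g j 0 * g l 0 * A (1, 0) (1, 0) + g j 0 * g l 1 * A (1, 0) (1, 1) + g j 0 * g l 2 * A (1, 0) (1, 2) + g j 1 * g l 0 * A (1, 1) (1, 0) + g j 1 * g l 1 * A (1, 1) (1, 1) + g j 1 * g l 2 * A (1, 1) (1, 2) + g j 2 * g l 0 * A (1, 2) (1, 0) + g j 2 * g l 1 * A (1, 2) (1, 1) + g j 2 * g l 2 * A (1, 2) (1, 2)) * h11 +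
      (g j 0 * g l 0 * A (1, 0) (2, 0) + g j 0 * g l 1 * A (1, 0) (2, 1) + g j 0 * g l 2 * A (1, 0) (2, 2) + g j 1 * g l 0 * A (1, 1) (2, 0) + g j 1 * g l 1 * A (1, 1) (2, 1) + g j 1 * g l 2 * A (1, 1) (2, 2) + g j 2 * g l 0 * A (1, 2) (2, 0) + g j 2 * g l 1 * A (1, 2) (2, 1) + g j 2 * g l 2 * A (1, 2) (2, 2)) * h12 +
      (g j 0 * g l 0 * A (2, 0) (0, 0) + g j 0 * g l 1 * A (2, 0) (0, 1) + g j 0 * g l 2 * A (2, 0) (0, 2) + g j 1 * g l 0 * A (2, 1) (0, 0) + g j 1 * g l 1 * A (2, 1) (0, 1) + g j 1 * g l 2 * A (2, 1) (0, 2) + g j 2 * g l 0 * A (2, 2) (0, 0) + g j 2 * g l 1 * A (2, 2) (0, 1) + g j 2 * g l 2 * A (2, 2) (0, 2)) * h20 +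
      (g j 0 * g l 0 * A (2, 0) (1, 0) + g j 0 * g l 1 * A (2, 0) (1, 1) + g j 0 * g l 2 * A (2, 0) (1, 2) + g j 1 * g l 0 * A (2, 1) (1, 0) + g j 1 * g l 1 * A (2, 1) (1, 1) + g j 1 * g l 2 * A (2, 1) (1, 2) + g j 2 * g l 0 * A (2, 2) (1, 0) + g j 2 * g l 1 * A (2, 2) (1, 1) + g j 2 * g l 2 * A (2, 2) (1, 2)) * h21 +
      (g j 0 * g l 0 * A (2, 0) (2, 0) + g j 0 * g l 1 * A (2, 0) (2, 1) + g j 0 * g l 2 * A (2, 0) (2, 2) + g j 1 * g l 0 * A (2, 1) (2, 0) + g j 1 * g l 1 * A (2, 1) (2, 1) + g j 1 * g l 2 * A (2, 1) (2, 2) + g j 2 * g l 0 * A (2, 2) (2, 0) + g j 2 * g l 1 * A (2, 2) (2, 1) + g j 2 * g l 2 * A (2, 2) (2, 2)) * h22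
lemma tM_sqT (D : T4) : tM (sqT D) = tM D * tM D := by
  ext ⟨i, j⟩ ⟨k, l⟩
  simp [tM, sqT, Matrix.mul_apply, Fintype.sum_prod_type]

lemma tM_cbT (D : T4) : tM (cbT D) = tM D * tM D * tM D := by
  ext ⟨i, j⟩ ⟨k, l⟩
  simp [tM, cbT, ← tM_sqT, Matrix.mul_apply, Fintype.sum_prod_type]
  rfl

lemma d2_eq (D : T4) : d2 D = ptr (tM (sqT D)) := rfl

lemma d3_eq (D : T4) : d3 D = ptr (tM (cbT D)) := rfl

lemma conj_conj {g : Mat3} (hg : g * gᵀ = 1) (A B : M9) :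
    (kr g * A * (kr g)ᵀ) * (kr g * B * (kr g)ᵀ) = kr g * (A * B) * (kr g)ᵀ := by
  have h := kr_orth' hg
  calc (kr g * A * (kr g)ᵀ) * (kr g * B * (kr g)ᵀ)
      = kr g * A * ((kr g)ᵀ * kr g) * B * (kr g)ᵀ := by simp [Matrix.mul_assoc]
    _ = kr g * (A * B) * (kr g)ᵀ := by rw [h, Matrix.mul_one]; simp [Matrix.mul_assoc]

lemma sqT_act {g : Mat3} (hg : g * gᵀ = 1) (D : T4) : sqT (act g D) = act g (sqT D) :=
  tM_inj (by rw [tM_sqT, tM_act, tM_act, tM_sqT, conj_conj hg])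

lemma cbT_act {g : Mat3} (hg : g * gᵀ = 1) (D : T4) : cbT (act g D) = act g (cbT D) :=
  tM_inj (by rw [tM_cbT, tM_act, tM_act, tM_cbT, conj_conj hg, conj_conj hg])

lemma d2_act {g : Mat3} (hg : g * gᵀ = 1) (D : T4) : d2 (act g D) = g * d2 D * gᵀ := by
  rw [d2_eq, sqT_act hg, tM_act, ptr_conj (mul_eq_one_comm.mp hg), ← d2_eq]

lemma d3_act {g : Mat3} (hg : g * gᵀ = 1) (D : T4) : d3 (act g D) = g * d3 D * gᵀ := by
  rw [d3_eq, cbT_act hg, tM_act, ptr_conj (mul_eq_one_comm.mp hg), ← d3_eq]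

lemma trace_conj {g : Mat3} (hg : g * gᵀ = 1) (m : Mat3) :
    (g * m * gᵀ).trace = m.trace := by
  rw [Matrix.trace_mul_cycle, mul_eq_one_comm.mp hg, Matrix.one_mul]

lemma J2_act {g : Mat3} (hg : g * gᵀ = 1) (D : T4) : J2 (act g D) = J2 D := by
  rw [J2, d2_act hg, trace_conj hg, J2]

lemma J3_act {g : Mat3} (hg : g * gᵀ = 1) (D : T4) : J3 (act g D) = J3 D := by
  rw [J3, d3_act hg, trace_conj hg, J3]

lemma J4_act {g : Mat3} (hg : g * gᵀ = 1) (D : T4) : J4 (act g D) = J4 D := by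
  have h2 : ∀ m : Mat3, gᵀ * (g * (m * gᵀ)) = m * gᵀ := fun m => by
    rw [← Matrix.mul_assoc, mul_eq_one_comm.mp hg, Matrix.one_mul]
  have h : ∀ m : Mat3, (g * m * gᵀ) * (g * m * gᵀ) = g * (m * m) * gᵀ := fun m => by
    simp only [Matrix.mul_assoc, h2]
  rw [J4, d2_act hg, h, trace_conj hg, J4]

/-- matrix as a 9-vector -/
def vec9 (m : Mat3) : Fin 3 × Fin 3 → ℝ := fun x => m x.1 x.2

lemma vec9_conj (g m : Mat3) : vec9 (g * m * gᵀ) = kr g *ᵥ vec9 m := by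
  funext ⟨i, j⟩
  simp [vec9, kr, Matrix.mulVec, dotProduct, Matrix.mul_apply,
    Fintype.sum_prod_type, Fin.sum_univ_three, Matrix.transpose_apply]
  ring

lemma J5_eq (D : T4) : J5 D = vec9 (d2 D) ⬝ᵥ (tM D *ᵥ vec9 (d2 D)) := by
  rw [J5]
  simp [vec9, tM, Matrix.mulVec, dotProduct, Fintype.sum_prod_type,
    Fin.sum_univ_three]
  ring

lemma J5_act {g : Mat3} (hg : g * gᵀ = 1) (D : T4) : J5 (act g D) = J5 D := by
  have hk := kr_orth' hg
  rw [J5_eq, J5_eq, d2_act hg, tM_act, vec9_conj]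
  rw [Matrix.mulVec_mulVec]
  have e1 : kr g * tM D * (kr g)ᵀ * kr g = kr g * tM D := by
    rw [Matrix.mul_assoc, hk, Matrix.mul_one]
  rw [e1, ← Matrix.mulVec_mulVec]
  rw [Matrix.dotProduct_mulVec, ← Matrix.vecMul_transpose, Matrix.vecMul_vecMul,
    kr_transpose, ← kr_transpose, mul_eq_one_comm.mp (kr_orth hg)]
  simp [Matrix.vecMul_one]
set_option maxHeartbeats 2000000 in
lemma NFcubic_eval (δ : ℝ) : NFcubic δ = ![![![![(8*δ), (0), (0)], ![(0), (-(4*δ)), (0)], ![(0), (0), (-(4*δ))]], ![![(0), (-(4*δ)), (0)], ![(-(4*δ)), (0), (0)], ![(0), (0), (0)]], ![![(0), (0), (-(4*δ))], ![(0), (0), (0)], ![(-(4*δ)), (0), (0)]]], ![![![(0), (-(4*δ)), (0)], ![(-(4*δ)), (0), (0)], ![(0), (0), (0)]], ![![(-(4*δ)), (0), (0)], ![(0), (8*δ), (0)], ![(0), (0), (-(4*δ))]], ![![(0), (0), (0)], ![(0), (0), (-(4*δ))], ![(0), (-(4*δ)), (0)]]], ![![![(0), (0), (-(4*δ))], ![(0),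 (0), (0)], ![(-(4*δ)), (0), (0)]], ![![(0), (0), (0)], ![(0), (0), (-(4*δ))], ![(0), (-(4*δ)), (0)]], ![![(-(4*δ)), (0), (0)], ![(0), (-(4*δ)), (0)], ![(0), (0), (8*δ)]]]] := by
  funext i j k l
  fin_cases i <;> fin_cases j <;> fin_cases k <;> fin_cases l <;>
    simp (config := { decide := true }) [NFcubic, symT, Matrix.vecHead, Matrix.vecTail]

set_option maxHeartbeats 2000000 in
lemma NFti_eval (δ : ℝ) : NFti δ = ![![![![(3*δ), (0), (0)], ![(0), (δ), (0)], ![(0), (0), (-(4*δ))]], ![![(0), (δ), (0)], ![(δ), (0), (0)], ![(0), (0), (0)]], ![![(0), (0), (-(4*δ))], ![(0), (0), (0)], ![(-(4*δ)), (0), (0)]]], ![![![(0), (δ), (0)], ![(δ), (0), (0)], ![(0), (0), (0)]], ![![(δ), (0), (0)], ![(0), (3*δ), (0)], ![(0), (0), (-(4*δ))]], ![![(0), (0), (0)], ![(0), (0), (-(4*δ))], ![(0), (-(4*δ)), (0)]]], ![![![(0), (0), (-(4*δ))], ![(0), (0), (0)], ![(-(4*δ)), (0), (0)]], ![![(0),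 (0), (0)], ![(0), (0), (-(4*δ))], ![(0), (-(4*δ)), (0)]], ![![(-(4*δ)), (0), (0)], ![(0), (-(4*δ)), (0)], ![(0), (0), (8*δ)]]]] := by
  funext i j k l
  fin_cases i <;> fin_cases j <;> fin_cases k <;> fin_cases l <;>
    simp (config := { decide := true }) [NFti, symT, Matrix.vecHead, Matrix.vecTail]

set_option maxHeartbeats 2000000 in
lemma NFtrig_eval (δ σ : ℝ) : NFtrig δ σ = ![![![![(3*δ), (0), (0)], ![(0), (δ), (-σ)], ![(0), (-σ), (-(4*δ))]], ![![(0), (δ), (-σ)], ![(δ), (0), (0)], ![(-σ), (0), (0)]], ![![(0), (-σ), (-(4*δ))], ![(-σ), (0), (0)], ![(-(4*δ)), (0), (0)]]], ![![![(0), (δ), (-σ)], ![(δ), (0), (0)], ![(-σ), (0), (0)]], ![![(δ), (0), (0)], ![(0), (3*δ), (σ)], ![(0), (σ), (-(4*δ))]], ![![(-σ), (0), (0)], ![(0), (σ), (-(4*δ))], ![(0), (-(4*δ)), (0)]]], ![![![(0), (-σ), (-(4*δ))], ![(-σ), (0), (0)], ![(-(4*δ)), (0), (0)]], ![![(-σ),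 (0), (0)], ![(0), (σ), (-(4*δ))], ![(0), (-(4*δ)), (0)]], ![![(-(4*δ)), (0), (0)], ![(0), (-(4*δ)), (0)], ![(0), (0), (8*δ)]]]] := by
  funext i j k l
  fin_cases i <;> fin_cases j <;> fin_cases k <;> fin_cases l <;>
    simp (config := { decide := true }) [NFtrig, symT, Matrix.vecHead, Matrix.vecTail]

set_option maxHeartbeats 2000000 in
lemma NFtetra_eval (δ σ : ℝ) : NFtetra δ σ = ![![![![(3*δ-σ), (0), (0)], ![(0), (δ+σ), (0)], ![(0), (0), (-(4*δ))]], ![![(0), (δ+σ), (0)], ![(δ+σ), (0), (0)], ![(0), (0), (0)]], ![![(0), (0), (-(4*δ))], ![(0), (0), (0)], ![(-(4*δ)), (0), (0)]]], ![![![(0), (δ+σ), (0)], ![(δ+σ), (0), (0)], ![(0), (0), (0)]], ![![(δ+σ), (0), (0)], ![(0), (3*δ-σ), (0)], ![(0), (0), (-(4*δ))]], ![![(0), (0), (0)], ![(0), (0), (-(4*δ))], ![(0), (-(4*δ)), (0)]]], ![![![(0), (0), (-(4*δ))], ![(0), (0), (0)], ![(-(4*δ)), (0), (0)]], ![![(0),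 (0), (0)], ![(0), (0), (-(4*δ))], ![(0), (-(4*δ)), (0)]], ![![(-(4*δ)), (0), (0)], ![(0), (-(4*δ)), (0)], ![(0), (0), (8*δ)]]]] := by
  funext i j k l
  fin_cases i <;> fin_cases j <;> fin_cases k <;> fin_cases l <;>
    simp (config := { decide := true }) [NFtetra, symT, Matrix.vecHead, Matrix.vecTail]
section NFvals
variable (δ σ : ℝ)

lemma d2_trig : d2 (NFtrig δ σ) =
    !![60*δ^2+6*σ^2, 0, 0; 0, 60*δ^2+6*σ^2, 0; 0, 0, 160*δ^2+4*σ^2] := by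
  ext j l
  fin_cases j <;> fin_cases l <;>
    (simp [d2, sqT, Fin.sum_univ_three, NFtrig_eval, Matrix.vecHead, Matrix.vecTail]; try ring)

lemma d2_tetra : d2 (NFtetra δ σ) =
    !![60*δ^2+4*σ^2, 0, 0; 0, 60*δ^2+4*σ^2, 0; 0, 0, 160*δ^2] := by
  ext j l
  fin_cases j <;> fin_cases l <;>
    (simp [d2, sqT, Fin.sum_univ_three, NFtetra_eval, Matrix.vecHead, Matrix.vecTail]; try ring)

lemma J2_trig : J2 (NFtrig δ σ) = 280*δ^2 + 16*σ^2 := by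
  rw [J2, d2_trig]
  simp [Matrix.trace, Fin.sum_univ_three, Matrix.vecHead, Matrix.vecTail]
  ring

lemma J2_tetra : J2 (NFtetra δ σ) = 280*δ^2 + 8*σ^2 := by
  rw [J2, d2_tetra]
  simp [Matrix.trace, Fin.sum_univ_three, Matrix.vecHead, Matrix.vecTail]
  ring

lemma J4_trig : J4 (NFtrig δ σ) = 32800*δ^4 + 2720*δ^2*σ^2 + 88*σ^4 := by
  rw [J4, d2_trig]
  simp [Matrix.trace, Matrix.mul_apply, Fin.sum_univ_three, Matrix.vecHead, Matrix.vecTail]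
  ring

lemma J4_tetra : J4 (NFtetra δ σ) = 32800*δ^4 + 960*δ^2*σ^2 + 32*σ^4 := by
  rw [J4, d2_tetra]
  simp [Matrix.trace, Matrix.mul_apply, Fin.sum_univ_three, Matrix.vecHead, Matrix.vecTail]
  ring

set_option maxHeartbeats 1000000 in
lemma J5_trig : J5 (NFtrig δ σ) = 80000*δ^5 - 3200*δ^3*σ^2 + 32*δ*σ^4 := by
  rw [J5]
  simp only [d2_trig]
  simp only [NFtrig_eval]
  simp [Fin.sum_univ_three, Matrix.vecHead, Matrix.vecTail]
  ring

set_option maxHeartbeats 1000000 in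
lemma J5_tetra : J5 (NFtetra δ σ) = 80000*δ^5 - 6400*δ^3*σ^2 + 128*δ*σ^4 := by
  rw [J5]
  simp only [d2_tetra]
  simp only [NFtetra_eval]
  simp [Fin.sum_univ_three, Matrix.vecHead, Matrix.vecTail]
  ring

set_option maxHeartbeats 2000000 in
lemma J3_cubic : J3 (NFcubic δ) = 1920*δ^3 := by
  rw [J3]
  simp only [d3, cbT, sqT, NFcubic_eval]
  simp [Matrix.trace, Matrix.diag, Fin.sum_univ_three, Matrix.vecHead, Matrix.vecTail]
  ring

set_option maxHeartbeats 2000000 in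
lemma J3_ti : J3 (NFti δ) = 720*δ^3 := by
  rw [J3]
  simp only [d3, cbT, sqT, NFti_eval]
  simp [Matrix.trace, Matrix.diag, Fin.sum_univ_three, Matrix.vecHead, Matrix.vecTail]
  ring

end NFvals
lemma isSO3_one : IsSO3 1 := by constructor <;> simp [IsSO3]

lemma isSO3_mul {g h : Mat3} (hg : IsSO3 g) (hh : IsSO3 h) : IsSO3 (g * h) := by
  refine ⟨?_, by rw [Matrix.det_mul, hg.2, hh.2, one_mul]⟩
  rw [Matrix.transpose_mul, Matrix.mul_assoc, ← Matrix.mul_assoc h, hh.1, Matrix.one_mul, hg.1]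

lemma isSO3_transpose {g : Mat3} (hg : IsSO3 g) : IsSO3 gᵀ := by
  refine ⟨?_, by rw [Matrix.det_transpose, hg.2]⟩
  rw [Matrix.transpose_transpose, mul_eq_one_comm.mp hg.1]

lemma act_cancel {g : Mat3} (hg : IsSO3 g) (D : T4) : act gᵀ (act g D) = D := by
  rw [act_act, mul_eq_one_comm.mp hg.1, act_one]

lemma orbit_of_eq {g g' : Mat3} {D D' N N' : T4} (hg : IsSO3 g) (hg' : IsSO3 g')
    (hact : act g D = N) (hact' : act g' D' = N') (k : Mat3) (hk : IsSO3 k)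
    (hNN : N' = act k N) : ∃ h : Mat3, IsSO3 h ∧ D' = act h D := by
  refine ⟨g'ᵀ * (k * g), isSO3_mul (isSO3_transpose hg') (isSO3_mul hk hg), ?_⟩
  rw [← act_act, ← act_act, hact, ← hNN, ← hact', act_cancel hg']

lemma cube_inj {x y : ℝ} (h : x ^ 3 = y ^ 3) : x = y :=
  (Odd.strictMono_pow (R := ℝ) (by decide : Odd 3)).injective h

lemma act_diagonal (v : Fin 3 → ℝ) (D : T4) (i j k l : Fin 3) :
    act (Matrix.diagonal v) D i j k l = v i * v j * v k * v l * D i j k l := by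
  simp [act, Matrix.diagonal_apply, ite_mul, mul_ite, zero_mul, mul_zero,
    Finset.sum_ite_eq, Finset.mul_sum, Finset.sum_ite_eq']
  try ring

noncomputable def gflip : Mat3 := Matrix.diagonal ![-1, 1, -1]

lemma isSO3_gflip : IsSO3 gflip := by
  constructor
  · ext i j
    fin_cases i <;> fin_cases j <;>
      simp [gflip, Matrix.mul_apply, Fin.sum_univ_three, Matrix.diagonal_apply,
        Matrix.vecHead, Matrix.vecTail]
  · simp [gflip, Matrix.det_diagonal, Fin.prod_univ_three, Matrix.vecHead, Matrix.vecTail]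

set_option maxHeartbeats 1000000 in
lemma act_gflip_trig (δ σ : ℝ) : act gflip (NFtrig δ σ) = NFtrig δ (-σ) := by
  funext i j k l
  rw [gflip, act_diagonal]
  fin_cases i <;> fin_cases j <;> fin_cases k <;> fin_cases l <;>
    (simp [NFtrig_eval, Matrix.vecHead, Matrix.vecTail]; try ring)
lemma isSO3_rot {c : ℝ} (hc : c ^ 2 = 1 / 2) : IsSO3 !![c,-c,0; c,c,0; 0,0,1] := by
  constructor
  · ext i j
    fin_cases i <;> fin_cases j <;>
      simp [Matrix.mul_apply, Fin.sum_univ_three, Matrix.vecHead, Matrix.vecTail,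
        Matrix.one_apply] <;>
      nlinarith [hc]
  · simp [Matrix.det_fin_three, Matrix.vecHead, Matrix.vecTail]
    nlinarith [hc]

set_option maxHeartbeats 2000000 in
lemma act_rot_tetra {c : ℝ} (hc : c ^ 2 = 1 / 2) (δ σ : ℝ) :
    act !![c,-c,0; c,c,0; 0,0,1] (NFtetra δ σ) = NFtetra δ (-σ) := by
  have hc3 : c ^ 3 = c / 2 := by
    rw [pow_succ, hc]; ring
  have hc4 : c ^ 4 = 1 / 4 := by
    rw [show (4 : ℕ) = 2 * 2 from rfl, pow_mul, hc]; norm_num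
  funext i j k l
  fin_cases i <;> fin_cases j <;> fin_cases k <;> fin_cases l <;>
    simp [act, Fin.sum_univ_three, NFtetra_eval, Matrix.vecHead, Matrix.vecTail] <;>
    ring_nf <;>
    simp only [hc, hc3, hc4] <;>
    try ring
/-- the invariants `J₂, J₃, J₄, J₅` separate the `SO(3)`-orbits inside each of
the cubic, transversely isotropic, trigonal and tetragonal classes of `H⁴`. -/
theorem invariants_separate_orbits_high_symmetry (D D' : T4)
    (hD : IsHarm D) (hD' : IsHarm D')
    (hJ : J2 D = J2 D' ∧ J3 D = J3 D' ∧ J4 D = J4 D' ∧ J5 D = J5 D')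
    (hcase :
      ((∃ (g : Mat3) (δ : ℝ), IsSO3 g ∧ act g D = NFcubic δ) ∧
       (∃ (g' : Mat3) (δ' : ℝ), IsSO3 g' ∧ act g' D' = NFcubic δ') ∧
       J2 D ≠ 0 ∧ J2 D' ≠ 0) ∨
      ((∃ (g : Mat3) (δ : ℝ), IsSO3 g ∧ act g D = NFti δ) ∧
       (∃ (g' : Mat3) (δ' : ℝ), IsSO3 g' ∧ act g' D' = NFti δ') ∧
       J2 D ≠ 0 ∧ J2 D' ≠ 0) ∨
      ((∃ (g : Mat3) (δ σ : ℝ), IsSO3 g ∧ act g D = NFtrig δ σ) ∧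
       (∃ (g' : Mat3) (δ' σ' : ℝ), IsSO3 g' ∧ act g' D' = NFtrig δ' σ') ∧
       3 * J4 D - (J2 D) ^ 2 ≠ 0 ∧ 98 * J4 D - 41 * (J2 D) ^ 2 ≠ 0 ∧
       3 * J4 D' - (J2 D') ^ 2 ≠ 0 ∧ 98 * J4 D' - 41 * (J2 D') ^ 2 ≠ 0) ∨
      ((∃ (g : Mat3) (δ σ : ℝ), IsSO3 g ∧ act g D = NFtetra δ σ) ∧
       (∃ (g' : Mat3) (δ' σ' : ℝ), IsSO3 g' ∧ act g' D' = NFtetra δ' σ') ∧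
       3 * J4 D - (J2 D) ^ 2 ≠ 0 ∧
       5 * (J2 D) ^ 3 - 8 * J2 D * J4 D - 70 * (J3 D) ^ 2 ≠ 0 ∧
       3 * J4 D' - (J2 D') ^ 2 ≠ 0 ∧
       5 * (J2 D') ^ 3 - 8 * J2 D' * J4 D' - 70 * (J3 D') ^ 2 ≠ 0)) :
    ∃ h : Mat3, IsSO3 h ∧ D' = act h D := by
  obtain ⟨hJ2, hJ3, hJ4, hJ5⟩ := hJ
  rcases hcase with
      ⟨⟨g, δ, hg, hact⟩, ⟨g', δ', hg', hact'⟩, -, -⟩ |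
      ⟨⟨g, δ, hg, hact⟩, ⟨g', δ', hg', hact'⟩, -, -⟩ |
      ⟨⟨g, δ, σ, hg, hact⟩, ⟨g', δ', σ', hg', hact'⟩, h3, -, -, -⟩ |
      ⟨⟨g, δ, σ, hg, hact⟩, ⟨g', δ', σ', hg', hact'⟩, h3, -, -, -⟩
  · -- cubic
    have e1 : J3 D = 1920 * δ ^ 3 := by rw [← J3_act hg.1 D, hact, J3_cubic]
    have e2 : J3 D' = 1920 * δ' ^ 3 := by rw [← J3_act hg'.1 D', hact', J3_cubic]
    have hδ : δ = δ' := cube_inj (by linarith)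
    exact orbit_of_eq hg hg' hact hact' 1 isSO3_one (by rw [act_one, hδ])
  · -- transversely isotropic
    have e1 : J3 D = 720 * δ ^ 3 := by rw [← J3_act hg.1 D, hact, J3_ti]
    have e2 : J3 D' = 720 * δ' ^ 3 := by rw [← J3_act hg'.1 D', hact', J3_ti]
    have hδ : δ = δ' := cube_inj (by linarith)
    exact orbit_of_eq hg hg' hact hact' 1 isSO3_one (by rw [act_one, hδ])
  · -- trigonal
    have e2 : J2 D = 280*δ^2 + 16*σ^2 := by rw [← J2_act hg.1 D, hact, J2_trig]
    have e4 : J4 D = 32800*δ^4 + 2720*δ^2*σ^2 + 88*σ^4 := by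
      rw [← J4_act hg.1 D, hact, J4_trig]
    have e5 : J5 D = 80000*δ^5 - 3200*δ^3*σ^2 + 32*δ*σ^4 := by
      rw [← J5_act hg.1 D, hact, J5_trig]
    have e2' : J2 D = 280*δ'^2 + 16*σ'^2 := by
      rw [hJ2, ← J2_act hg'.1 D', hact', J2_trig]
    have e4' : J4 D = 32800*δ'^4 + 2720*δ'^2*σ'^2 + 88*σ'^4 := by
      rw [hJ4, ← J4_act hg'.1 D', hact', J4_trig]
    have e5' : J5 D = 80000*δ'^5 - 3200*δ'^3*σ'^2 + 32*δ'*σ'^4 := by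
      rw [hJ5, ← J5_act hg'.1 D', hact', J5_trig]
    have k1 : 4*δ*(3 * J4 D - (J2 D)^2) = 4*δ'*(3 * J4 D - (J2 D)^2) := by
      rw [show (4:ℝ)*δ*(3 * J4 D - (J2 D)^2) = J5 D by rw [e2, e4, e5]; ring,
        show (4:ℝ)*δ'*(3 * J4 D - (J2 D)^2) = J5 D by rw [e2', e4', e5']; ring]
    have hδ : δ = δ' := by
      have := mul_right_cancel₀ h3 k1
      linarith
    rw [← hδ] at e2'
    have hσ2 : (σ' - σ) * (σ' + σ) = 0 := by nlinarith [e2, e2']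
    rcases mul_eq_zero.mp hσ2 with hs | hs
    · have hs' : σ' = σ := by linarith
      exact orbit_of_eq hg hg' hact hact' 1 isSO3_one (by rw [act_one, hs', hδ])
    · have hs' : σ' = -σ := by linarith
      refine orbit_of_eq hg hg' hact hact' gflip isSO3_gflip ?_
      rw [act_gflip_trig, hs', hδ]
  · -- tetragonal
    have e2 : J2 D = 280*δ^2 + 8*σ^2 := by rw [← J2_act hg.1 D, hact, J2_tetra]
    have e4 : J4 D = 32800*δ^4 + 960*δ^2*σ^2 + 32*σ^4 := by
      rw [← J4_act hg.1 D, hact, J4_tetra]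
    have e5 : J5 D = 80000*δ^5 - 6400*δ^3*σ^2 + 128*δ*σ^4 := by
      rw [← J5_act hg.1 D, hact, J5_tetra]
    have e2' : J2 D = 280*δ'^2 + 8*σ'^2 := by
      rw [hJ2, ← J2_act hg'.1 D', hact', J2_tetra]
    have e4' : J4 D = 32800*δ'^4 + 960*δ'^2*σ'^2 + 32*σ'^4 := by
      rw [hJ4, ← J4_act hg'.1 D', hact', J4_tetra]
    have e5' : J5 D = 80000*δ'^5 - 6400*δ'^3*σ'^2 + 128*δ'*σ'^4 := by
      rw [hJ5, ← J5_act hg'.1 D', hact', J5_tetra]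
    have k1 : 4*δ*(3 * J4 D - (J2 D)^2) = 4*δ'*(3 * J4 D - (J2 D)^2) := by
      rw [show (4:ℝ)*δ*(3 * J4 D - (J2 D)^2) = J5 D by rw [e2, e4, e5]; ring,
        show (4:ℝ)*δ'*(3 * J4 D - (J2 D)^2) = J5 D by rw [e2', e4', e5']; ring]
    have hδ : δ = δ' := by
      have := mul_right_cancel₀ h3 k1
      linarith
    rw [← hδ] at e2'
    have hσ2 : (σ' - σ) * (σ' + σ) = 0 := by nlinarith [e2, e2']
    rcases mul_eq_zero.mp hσ2 with hs | hs
    · have hs' : σ' = σ := by linarith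
      exact orbit_of_eq hg hg' hact hact' 1 isSO3_one (by rw [act_one, hs', hδ])
    · have hs' : σ' = -σ := by linarith
      have hc : (Real.sqrt 2 / 2) ^ 2 = 1 / 2 := by
        rw [div_pow, Real.sq_sqrt (by norm_num : (0:ℝ) ≤ 2)]
        norm_num
      refine orbit_of_eq hg hg' hact hact'
        !![Real.sqrt 2 / 2, -(Real.sqrt 2 / 2), 0;
           Real.sqrt 2 / 2, Real.sqrt 2 / 2, 0; 0, 0, 1] (isSO3_rot hc) ?_
      rw [act_rot_tetra hc, hs', hδ]
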